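/- For a 3-dimensional almost paracontact metric manifold M with structure (φ, ξ, η, g) and Levi-Civita connection ∇, the following three conditions are mutually equivalent: (a) M is normal; (b) there exist smooth functions α, β on M such that (∇_X φ)Y = β(g(X,Y)ξ − η(Y)X) + α(g(φX,Y)ξ − η(Y)φX) for all vector fields X, Y; (c) there exist smooth functions α, β on M such that ∇_X ξ = α(X − η(X)ξ) + β φX for all vector fields X. -/

import Mathlib

set_option linter.unusedSectionVars false
set_option maxHeartbeats 1000000


/-- A 3-dimensional almost paracontact metric manifold, presented algebraically
(Koszul style): `C` is the commutative ℝ-algebra of smooth functions on `M`,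
`X` is the `C`-module of vector fields on `M` (with a global `g`-orthonormal
frame of signature `(2,1)`, i.e. `(+,+,-)`), `act` is the action of vector
fields on functions by derivation, `bracket` the Lie bracket, `g` the
pseudo-Riemannian metric, `nabla` its Levi-Civita connection and
`(phi, xi, eta)` the almost paracontact structure, so that `η(ξ) = 1`,
`φ² = Id − η ⊗ ξ`, `η(X) = g(X,ξ)` and `g(φX,φY) = −g(X,Y) + η(X)η(Y)`. -/
structure APCMM3 (C : Type*) (X : Type*) [CommRing C] [Algebra ℝ C]
    [AddCommGroup X] [Module C X] where
  act : X → C → C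
  bracket : X → X → X
  g : X →ₗ[C] X →ₗ[C] C
  phi : X →ₗ[C] X
  xi : X
  eta : X →ₗ[C] C
  nabla : X → X → X
  act_add : ∀ x y f, act (x + y) f = act x f + act y f
  act_smul : ∀ (h : C) x f, act (h • x) f = h * act x f
  act_addf : ∀ x f₁ f₂, act x (f₁ + f₂) = act x f₁ + act x f₂
  act_mul : ∀ x f₁ f₂, act x (f₁ * f₂) = act x f₁ * f₂ + f₁ * act x f₂
  act_algebraMap : ∀ x (r : ℝ), act x (algebraMap ℝ C r) = 0
  bracket_antisymm : ∀ x y, bracket x y = -bracket y x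
  bracket_act : ∀ x y f, act (bracket x y) f = act x (act y f) - act y (act x f)
  g_symm : ∀ x y, g x y = g y x
  eta_def : ∀ x, eta x = g x xi
  eta_xi : eta xi = 1
  phi_xi : phi xi = 0
  phi_sq : ∀ x, phi (phi x) = x - eta x • xi
  compat : ∀ x y, g (phi x) (phi y) = -(g x y) + eta x * eta y
  frame : ∃ e : Module.Basis (Fin 3) C X,
    g (e 0) (e 0) = 1 ∧ g (e 1) (e 1) = 1 ∧ g (e 2) (e 2) = -1 ∧
    g (e 0) (e 1) = 0 ∧ g (e 0) (e 2) = 0 ∧ g (e 1) (e 2) = 0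
  nabla_add_left : ∀ x y z, nabla (x + y) z = nabla x z + nabla y z
  nabla_smul_left : ∀ (f : C) x z, nabla (f • x) z = f • nabla x z
  nabla_add_right : ∀ x y z, nabla x (y + z) = nabla x y + nabla x z
  nabla_smul_right : ∀ (f : C) x y, nabla x (f • y) = act x f • y + f • nabla x y
  torsion_free : ∀ x y, nabla x y - nabla y x = bracket x y
  metric_compat : ∀ x y z, act x (g y z) = g (nabla x y) z + g y (nabla x z)

variable {C X : Type*} [CommRing C] [Algebra ℝ C] [AddCommGroup X] [Module C X]

/-- The normality tensor
`N⁽¹⁾(X,Y) = [φ,φ](X,Y) − 2dη(X,Y)ξ`, where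
`[φ,φ](X,Y) = φ²[X,Y] + [φX,φY] − φ[φX,Y] − φ[X,φY]` and
`2dη(X,Y) = X(η(Y)) − Y(η(X)) − η([X,Y])`. -/
def APCMM3.N1 (M : APCMM3 C X) (x y : X) : X :=
  M.phi (M.phi (M.bracket x y)) + M.bracket (M.phi x) (M.phi y)
    - M.phi (M.bracket (M.phi x) y) - M.phi (M.bracket x (M.phi y))
    - (M.act x (M.eta y) - M.act y (M.eta x) - M.eta (M.bracket x y)) • M.xi

/-- `M` is normal if `N⁽¹⁾` vanishes identically. -/
def APCMM3.Normal (M : APCMM3 C X) : Prop := ∀ x y, M.N1 x y = 0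

namespace APCMM3

variable {C X : Type*} [CommRing C] [Algebra ℝ C] [AddCommGroup X] [Module C X]
variable (M : APCMM3 C X)

lemma cancel_two' (u : C) (h : 2 * u = 0) : u = 0 := by
  have h2 : (algebraMap ℝ C) (2⁻¹) * 2 = 1 := by
    have h0 : ((2:C)) = algebraMap ℝ C 2 := by
      rw [map_ofNat]
    rw [h0, ← map_mul]
    norm_num
  calc u = ((algebraMap ℝ C) (2⁻¹) * 2) * u := by rw [h2, one_mul]
    _ = (algebraMap ℝ C) (2⁻¹) * (2 * u) := by ring
    _ = 0 := by rw [h, mul_zero]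

lemma act_zero (x : X) : M.act x (0 : C) = 0 := by
  have h := M.act_addf x 0 0
  simpa using h

lemma act_one (x : X) : M.act x (1 : C) = 0 := by
  have := M.act_algebraMap x 1
  simpa using this

lemma act_neg (x : X) (f : C) : M.act x (-f) = -M.act x f := by
  have h := M.act_addf x f (-f)
  rw [add_neg_cancel, M.act_zero] at h
  linear_combination -h

lemma nabla_zero_right (x : X) : M.nabla x (0 : X) = 0 := by
  have h := M.nabla_add_right x 0 0
  simpa using h.symm

lemma nabla_zero_left (z : X) : M.nabla (0 : X) z = 0 := by
  have h := M.nabla_add_left 0 0 z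
  simpa using h.symm

lemma nabla_sub_right (x y z : X) : M.nabla x (y - z) = M.nabla x y - M.nabla x z := by
  have h := M.nabla_add_right x (y - z) z
  rw [sub_add_cancel] at h
  rw [h]; abel

lemma g_xi_xi : M.g M.xi M.xi = 1 := by rw [← M.eta_def, M.eta_xi]

lemma eta_phi (x : X) : M.eta (M.phi x) = 0 := by
  have h1 : M.phi (M.phi (M.phi x)) = M.phi x - M.eta (M.phi x) • M.xi := M.phi_sq (M.phi x)
  have h2 : M.phi (M.phi (M.phi x)) = M.phi x := by
    rw [M.phi_sq x, map_sub, map_smul, M.phi_xi, smul_zero, sub_zero]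
  have h3 : M.eta (M.phi x) • M.xi = 0 := by
    have h4 : M.eta (M.phi x) • M.xi = M.phi x - M.phi (M.phi (M.phi x)) := by
      rw [h1]; abel
    rw [h4, h2, sub_self]
  have h4 := congrArg M.eta h3
  rw [map_smul, M.eta_xi, smul_eq_mul, mul_one, map_zero] at h4
  exact h4

lemma g_phi_xi (x : X) : M.g (M.phi x) M.xi = 0 := by
  rw [← M.eta_def]; exact M.eta_phi x

lemma g_phi_left (x y : X) : M.g (M.phi x) y = -M.g x (M.phi y) := by
  have h := M.compat x (M.phi y)
  rw [M.eta_phi y, mul_zero, add_zero] at h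
  rw [M.phi_sq y, map_sub, map_smul] at h
  rw [M.g_phi_xi x, smul_eq_mul, mul_zero, sub_zero] at h
  exact h

lemma eta_nabla_xi (x : X) : M.g (M.nabla x M.xi) M.xi = 0 := by
  have h := M.metric_compat x M.xi M.xi
  rw [M.g_xi_xi, M.act_one] at h
  rw [M.g_symm M.xi (M.nabla x M.xi)] at h
  exact cancel_two' _ (by linear_combination -h)


/-- The orthonormality conditions for a frame. -/
def Gram (M : APCMM3 C X) (e : Module.Basis (Fin 3) C X) : Prop :=
  M.g (e 0) (e 0) = 1 ∧ M.g (e 1) (e 1) = 1 ∧ M.g (e 2) (e 2) = -1 ∧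
    M.g (e 0) (e 1) = 0 ∧ M.g (e 0) (e 2) = 0 ∧ M.g (e 1) (e 2) = 0

lemma expand (e : Module.Basis (Fin 3) C X) (v : X) :
    v = e.repr v 0 • e 0 + e.repr v 1 • e 1 + e.repr v 2 • e 2 := by
  have h := e.sum_repr v
  rw [Fin.sum_univ_three] at h
  exact h.symm

lemma g_coords (e : Module.Basis (Fin 3) C X) (he : M.Gram e) (y z : X) :
    M.g y z = e.repr y 0 * e.repr z 0 + e.repr y 1 * e.repr z 1
      - e.repr y 2 * e.repr z 2 := by
  obtain ⟨h00, h11, h22, h01, h02, h12⟩ := he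
  have h10 : M.g (e 1) (e 0) = 0 := by rw [M.g_symm]; exact h01
  have h20 : M.g (e 2) (e 0) = 0 := by rw [M.g_symm]; exact h02
  have h21 : M.g (e 2) (e 1) = 0 := by rw [M.g_symm]; exact h12
  conv_lhs => rw [expand e y, expand e z]
  simp only [map_add, map_smul, LinearMap.add_apply, LinearMap.smul_apply, smul_eq_mul,
    h00, h11, h22, h01, h02, h12, h10, h20, h21]
  ring

lemma xi_norm (e : Module.Basis (Fin 3) C X) (he : M.Gram e) :
    e.repr M.xi 0 * e.repr M.xi 0 + e.repr M.xi 1 * e.repr M.xi 1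
      - e.repr M.xi 2 * e.repr M.xi 2 = 1 := by
  rw [← M.g_coords e he, M.g_xi_xi]

lemma nondeg (e : Module.Basis (Fin 3) C X) (he : M.Gram e) (v : X)
    (h : ∀ z, M.g v z = 0) : v = 0 := by
  have h0 := h (e 0); have h1 := h (e 1); have h2 := h (e 2)
  rw [M.g_coords e he] at h0 h1 h2
  simp [Module.Basis.repr_self, Finsupp.single_apply] at h0 h1 h2
  rw [expand e v, h0, h1, h2]
  simp

lemma eta_coords (e : Module.Basis (Fin 3) C X) (he : M.Gram e) (v : X) :
    M.eta v = e.repr v 0 * e.repr M.xi 0 + e.repr v 1 * e.repr M.xi 1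
      - e.repr v 2 * e.repr M.xi 2 := by
  rw [M.eta_def, M.g_coords e he]

/-- The reference volume-type 2-form `ν = ι_ξ vol` in coordinates. -/
noncomputable def nuF (M : APCMM3 C X) (e : Module.Basis (Fin 3) C X) (y z : X) : C :=
  e.repr M.xi 0 * (e.repr y 1 * e.repr z 2 - e.repr y 2 * e.repr z 1)
    - e.repr M.xi 1 * (e.repr y 0 * e.repr z 2 - e.repr y 2 * e.repr z 0)
    + e.repr M.xi 2 * (e.repr y 0 * e.repr z 1 - e.repr y 1 * e.repr z 0)

/-- The coefficient of a skew 2-form with `ι_ξ ω = 0` relative to `ν`. -/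
noncomputable def fcoef (M : APCMM3 C X) (e : Module.Basis (Fin 3) C X) (ω : X → X → C) : C :=
  e.repr M.xi 0 * ω (e 1) (e 2) + e.repr M.xi 1 * ω (e 2) (e 0)
    - e.repr M.xi 2 * ω (e 0) (e 1)

/-- Any alternating bilinear form annihilated by `ξ` is a multiple of `ν`. -/
lemma lambda2 (e : Module.Basis (Fin 3) C X) (he : M.Gram e) (ω : X → X → C)
    (haddl : ∀ y y' z, ω (y + y') z = ω y z + ω y' z)
    (hsmull : ∀ (f : C) y z, ω (f • y) z = f * ω y z)
    (haddr : ∀ y z z', ω y (z + z') = ω y z + ω y z')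
    (hsmulr : ∀ (f : C) y z, ω y (f • z) = f * ω y z)
    (hskew : ∀ y z, ω y z = -ω z y)
    (hxi : ∀ z, ω M.xi z = 0) :
    ∀ y z, ω y z = M.fcoef e ω * M.nuF e y z := by
  have hnorm := M.xi_norm e he
  have e00 : ω (e 0) (e 0) = 0 := cancel_two' _ (by linear_combination hskew (e 0) (e 0))
  have e11 : ω (e 1) (e 1) = 0 := cancel_two' _ (by linear_combination hskew (e 1) (e 1))
  have e22 : ω (e 2) (e 2) = 0 := cancel_two' _ (by linear_combination hskew (e 2) (e 2))
  have s10 : ω (e 1) (e 0) = -ω (e 0) (e 1) := hskew _ _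
  have s20 : ω (e 2) (e 0) = -ω (e 0) (e 2) := hskew _ _
  have s21 : ω (e 2) (e 1) = -ω (e 1) (e 2) := hskew _ _
  have rx : ∀ j, e.repr M.xi 0 * ω (e 0) j + e.repr M.xi 1 * ω (e 1) j
      + e.repr M.xi 2 * ω (e 2) j = 0 := by
    intro j
    have h := hxi j
    conv_lhs at h => rw [expand e M.xi]
    rw [haddl, haddl, hsmull, hsmull, hsmull] at h
    linear_combination h
  have c0 := rx (e 0); have c1 := rx (e 1); have c2 := rx (e 2)
  rw [e00, s10, s20] at c0
  rw [e11, s21] at c1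
  rw [e22] at c2
  -- c0 : -a1*W2 - a2*W1'... (W1' = ω e0 e2 = -W1)
  have comp0 : ω (e 1) (e 2) = M.fcoef e ω * e.repr M.xi 0 := by
    rw [fcoef, s20]
    linear_combination (e.repr M.xi 1) * c2 + (e.repr M.xi 2) * c1
      - ω (e 1) (e 2) * hnorm
  have comp1 : ω (e 2) (e 0) = M.fcoef e ω * e.repr M.xi 1 := by
    rw [fcoef, s20]
    linear_combination (-(e.repr M.xi 0)) * c2 - (e.repr M.xi 2) * c0
      - (-(ω (e 0) (e 2))) * hnorm
  have comp2 : ω (e 0) (e 1) = M.fcoef e ω * e.repr M.xi 2 := by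
    rw [fcoef, s20]
    linear_combination (e.repr M.xi 0) * c1 - (e.repr M.xi 1) * c0
      - ω (e 0) (e 1) * hnorm
  intro y z
  conv_lhs => rw [expand e y, expand e z]
  rw [haddl, haddl, hsmull, hsmull, hsmull, haddr, haddr, haddr, haddr, haddr, haddr,
    hsmulr, hsmulr, hsmulr, hsmulr, hsmulr, hsmulr, hsmulr, hsmulr, hsmulr]
  rw [e00, e11, e22, s10, s20, s21, nuF]
  linear_combination (e.repr y 1 * e.repr z 2 - e.repr y 2 * e.repr z 1) * comp0
    + (e.repr y 2 * e.repr z 0 - e.repr y 0 * e.repr z 2) * comp1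
    + (e.repr y 0 * e.repr z 1 - e.repr y 1 * e.repr z 0) * comp2
    + (e.repr y 0 * e.repr z 2 - e.repr y 2 * e.repr z 0) * s20


/-- The fundamental 2-form `Φ(y,z) = g(y, φz)`. -/
def PhiF (M : APCMM3 C X) : X → X → C := fun y z => M.g y (M.phi z)

lemma PhiF_skew (y z : X) : M.PhiF y z = -M.PhiF z y := by
  show M.g y (M.phi z) = -M.g z (M.phi y)
  rw [M.g_symm, M.g_phi_left]

lemma PhiF_xi (z : X) : M.PhiF M.xi z = 0 := by
  show M.g M.xi (M.phi z) = 0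
  rw [M.g_symm]; exact M.g_phi_xi z

lemma lemZ (e : Module.Basis (Fin 3) C X) (he : M.Gram e) (k : C)
    (h : ∀ y z, k * (M.g y z - M.eta y * M.eta z) = 0) : k = 0 := by
  have hnorm := M.xi_norm e he
  have h0 := h (e 0) (e 0); have h1 := h (e 1) (e 1); have h2 := h (e 2) (e 2)
  rw [M.g_coords e he, M.eta_coords e he] at h0 h1 h2
  simp [Module.Basis.repr_self, Finsupp.single_apply] at h0 h1 h2
  apply cancel_two'
  linear_combination h0 + h1 - h2 + k * hnorm

lemma nu_contraction (e : Module.Basis (Fin 3) C X) (he : M.Gram e) (y z : X) :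
    M.nuF e y (e 0) * M.nuF e (e 0) z + M.nuF e y (e 1) * M.nuF e (e 1) z
      - M.nuF e y (e 2) * M.nuF e (e 2) z = M.g y z - M.eta y * M.eta z := by
  have hnorm := M.xi_norm e he
  rw [M.g_coords e he, M.eta_coords e he y, M.eta_coords e he z]
  simp only [nuF]
  simp [Module.Basis.repr_self, Finsupp.single_apply]
  linear_combination (e.repr y 0 * e.repr z 0 + e.repr y 1 * e.repr z 1
    - e.repr y 2 * e.repr z 2) * hnorm

/-- The coefficient of `Φ` relative to `ν`. -/
noncomputable def cC (M : APCMM3 C X) (e : Module.Basis (Fin 3) C X) : C := M.fcoef e M.PhiF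

lemma Phi_eq (e : Module.Basis (Fin 3) C X) (he : M.Gram e) :
    ∀ y z, M.PhiF y z = M.cC e * M.nuF e y z := by
  apply M.lambda2 e he
  · intro y y' z; show M.g (y + y') _ = _; rw [map_add, LinearMap.add_apply]; rfl
  · intro f y z; show M.g (f • y) _ = _; rw [map_smul, LinearMap.smul_apply, smul_eq_mul]; rfl
  · intro y z z'; show M.g y (M.phi (z + z')) = _; rw [map_add, map_add]; rfl
  · intro f y z; show M.g y (M.phi (f • z)) = _; rw [map_smul, map_smul, smul_eq_mul]; rfl
  · exact M.PhiF_skew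
  · exact M.PhiF_xi

lemma Phi_complete (e : Module.Basis (Fin 3) C X) (he : M.Gram e) (y z : X) :
    M.PhiF y (e 0) * M.PhiF (e 0) z + M.PhiF y (e 1) * M.PhiF (e 1) z
      - M.PhiF y (e 2) * M.PhiF (e 2) z = M.g y z - M.eta y * M.eta z := by
  have hy : ∀ i, M.PhiF y (e i) = -M.g (M.phi y) (e i) := by
    intro i; show M.g y (M.phi (e i)) = _
    rw [M.g_phi_left y (e i)]; ring
  have hz : ∀ i, M.PhiF (e i) z = M.g (M.phi z) (e i) := by
    intro i; show M.g (e i) (M.phi z) = _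
    rw [M.g_symm]
  rw [hy 0, hy 1, hy 2, hz 0, hz 1, hz 2]
  have hc := M.compat y z
  rw [M.g_coords e he (M.phi y) (M.phi z)] at hc
  rw [M.g_coords e he (M.phi y) (e 0), M.g_coords e he (M.phi y) (e 1),
    M.g_coords e he (M.phi y) (e 2), M.g_coords e he (M.phi z) (e 0),
    M.g_coords e he (M.phi z) (e 1), M.g_coords e he (M.phi z) (e 2)]
  simp [Module.Basis.repr_self, Finsupp.single_apply]
  linear_combination -hc

lemma c_sq (e : Module.Basis (Fin 3) C X) (he : M.Gram e) : M.cC e * M.cC e = 1 := by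
  have key : ∀ y z, (M.cC e * M.cC e - 1) * (M.g y z - M.eta y * M.eta z) = 0 := by
    intro y z
    have h1 := M.Phi_complete e he y z
    rw [M.Phi_eq e he y (e 0), M.Phi_eq e he (e 0) z, M.Phi_eq e he y (e 1),
      M.Phi_eq e he (e 1) z, M.Phi_eq e he y (e 2), M.Phi_eq e he (e 2) z] at h1
    have h2 := M.nu_contraction e he y z
    linear_combination h1 - (M.cC e * M.cC e) * h2
  have := M.lemZ e he _ key
  linear_combination this


/-- The obstruction 2-form measuring the failure of the key identity
`(∇_x φ)y = g(φ∇_xξ, y)ξ − η(y)φ∇_xξ`. -/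
def omegaF (M : APCMM3 C X) (x : X) : X → X → C := fun y z =>
  M.g (M.nabla x (M.phi y) - M.phi (M.nabla x y)) z
    + M.eta y * M.g (M.phi (M.nabla x M.xi)) z
    - M.eta z * M.g (M.phi (M.nabla x M.xi)) y

lemma om_addl (x y y' z : X) :
    M.omegaF x (y + y') z = M.omegaF x y z + M.omegaF x y' z := by
  simp only [omegaF, map_add, M.nabla_add_right, map_sub, LinearMap.add_apply,
    LinearMap.sub_apply]
  ring

lemma om_addr (x y z z' : X) :
    M.omegaF x y (z + z') = M.omegaF x y z + M.omegaF x y z' := by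
  simp only [omegaF, map_add, map_sub, LinearMap.add_apply, LinearMap.sub_apply]
  ring

lemma om_smulr (x : X) (f : C) (y z : X) :
    M.omegaF x y (f • z) = f * M.omegaF x y z := by
  simp only [omegaF, map_smul, map_sub, LinearMap.sub_apply, smul_eq_mul]
  ring

lemma om_smull (x : X) (f : C) (y z : X) :
    M.omegaF x (f • y) z = f * M.omegaF x y z := by
  simp only [omegaF, map_smul, M.nabla_smul_right, map_add, map_sub, smul_eq_mul,
    LinearMap.add_apply, LinearMap.sub_apply, LinearMap.smul_apply]
  ring

lemma om_skew (x y z : X) : M.omegaF x y z = -M.omegaF x z y := by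
  have h1 := M.metric_compat x (M.phi y) z
  have h2 := M.metric_compat x y (M.phi z)
  have h4 := congrArg (M.act x) (M.g_phi_left y z)
  rw [M.act_neg] at h4
  have h5 := M.g_phi_left (M.nabla x y) z
  have h6 := M.g_phi_left (M.nabla x z) y
  have h7 := M.g_symm (M.phi y) (M.nabla x z)
  have h8 := M.g_symm y (M.nabla x (M.phi z))
  simp only [omegaF, map_sub, LinearMap.sub_apply]
  linear_combination (-1 : C) * h1 - h2 - h5 - h6 - h7 - h8 + h4

lemma om_xi (x z : X) : M.omegaF x M.xi z = 0 := by
  simp only [omegaF, M.phi_xi, M.nabla_zero_right, M.eta_xi, zero_sub, map_neg,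
    LinearMap.neg_apply, one_mul]
  rw [M.eta_def z, M.g_symm z M.xi, ← M.eta_def (M.phi (M.nabla x M.xi)), M.eta_phi]
  ring

lemma om_diamond (x y z : X) :
    M.omegaF x y (M.phi z) + M.omegaF x z (M.phi y) = 0 := by
  have h1 := M.metric_compat x (M.phi y) (M.phi z)
  have h3 := congrArg (M.act x) (M.compat y z)
  rw [M.act_addf, M.act_neg, M.act_mul, M.eta_def y, M.eta_def z] at h3
  have h4 := M.metric_compat x y z
  have h5 := M.metric_compat x y M.xi
  have h6 := M.metric_compat x z M.xi
  have c1 := M.compat (M.nabla x y) z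
  have c2 := M.compat (M.nabla x z) y
  have c3 := M.compat (M.nabla x M.xi) z
  have c4 := M.compat (M.nabla x M.xi) y
  rw [M.eta_def, M.eta_def] at c1 c2 c3 c4
  have hAx := M.eta_nabla_xi x
  have s1 := M.g_symm (M.phi y) (M.nabla x (M.phi z))
  have s2 := M.g_symm y (M.nabla x z)
  have s3 := M.g_symm y (M.nabla x M.xi)
  have s4 := M.g_symm z (M.nabla x M.xi)
  simp only [omegaF, map_sub, LinearMap.sub_apply, M.eta_def, M.g_phi_xi]
  linear_combination (-1 : C) * h1 - s1 - c1 - c2 + (M.g y M.xi) * c3 + (M.g z M.xi) * c4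
    + h3 - h4 - s2 + (M.g z M.xi) * h5 + (M.g z M.xi) * s3 + (M.g y M.xi) * h6
    + (M.g y M.xi) * s4 + (2 * M.g y M.xi * M.g z M.xi) * hAx

/-- The key dimension-3 identity:
`(∇_x φ)y = g(φ∇_xξ, y)ξ − η(y) φ∇_xξ`. -/
lemma star (e : Module.Basis (Fin 3) C X) (he : M.Gram e) (x y : X) :
    M.nabla x (M.phi y) - M.phi (M.nabla x y)
      = M.g (M.phi (M.nabla x M.xi)) y • M.xi - M.eta y • M.phi (M.nabla x M.xi) := by
  have hom := M.lambda2 e he (M.omegaF x) (fun y y' z => M.om_addl x y y' z)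
    (fun f y z => M.om_smull x f y z) (fun y z z' => M.om_addr x y z z')
    (fun f y z => M.om_smulr x f y z) (fun y z => M.om_skew x y z)
    (fun z => M.om_xi x z)
  have hf : ∀ u v, M.fcoef e (M.omegaF x) * (M.g u v - M.eta u * M.eta v) = 0 := by
    intro u v
    have hd := M.om_diamond x u v
    have h1 := hom u (M.phi v)
    have h2 := hom v (M.phi u)
    have p1 := M.Phi_eq e he u (M.phi v)
    have p2 := M.Phi_eq e he v (M.phi u)
    have q1 : M.PhiF u (M.phi v) = M.g u v - M.eta u * M.eta v := by
      show M.g u (M.phi (M.phi v)) = _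
      rw [M.phi_sq v, map_sub, map_smul, smul_eq_mul, ← M.eta_def u]
      ring
    have q2 : M.PhiF v (M.phi u) = M.g v u - M.eta v * M.eta u := by
      show M.g v (M.phi (M.phi u)) = _
      rw [M.phi_sq u, map_sub, map_smul, smul_eq_mul, ← M.eta_def v]
      ring
    have hsym := M.g_symm u v
    apply cancel_two'
    linear_combination (M.cC e) * hd - (M.cC e) * h1 - (M.cC e) * h2
      + (M.fcoef e (M.omegaF x)) * p1 + (M.fcoef e (M.omegaF x)) * p2
      - (M.fcoef e (M.omegaF x)) * q1 - (M.fcoef e (M.omegaF x)) * q2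
      + (M.fcoef e (M.omegaF x)) * hsym
  have hf0 := M.lemZ e he _ hf
  apply eq_of_sub_eq_zero
  apply M.nondeg e he
  intro z
  have h := hom y z
  rw [hf0, zero_mul] at h
  have hs := M.g_symm M.xi z
  simp only [omegaF, map_sub, LinearMap.sub_apply] at h
  simp only [map_sub, LinearMap.sub_apply, map_smul, LinearMap.smul_apply, smul_eq_mul]
  rw [← M.eta_def z] at hs
  linear_combination h - M.g (M.phi (M.nabla x M.xi)) y * hs

/-- `B = φ∘A∘φ − A` where `A = ∇ξ`. -/
def Bop (M : APCMM3 C X) (x : X) : X :=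
  M.phi (M.nabla (M.phi x) M.xi) - M.nabla x M.xi

lemma nabla_sub_left (x y z : X) : M.nabla (x - y) z = M.nabla x z - M.nabla y z := by
  have h := M.nabla_add_left (x - y) y z
  rw [sub_add_cancel] at h
  rw [h]; abel

lemma eta_nabla_xi' (x : X) : M.eta (M.nabla x M.xi) = 0 := by
  rw [M.eta_def]; exact M.eta_nabla_xi x

lemma N1_eq (e : Module.Basis (Fin 3) C X) (he : M.Gram e) (x y : X) :
    M.N1 x y = (M.g (M.Bop x) y - M.g (M.Bop y) x) • M.xi
      + M.eta x • M.Bop y - M.eta y • M.Bop x := by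
  have hb : ∀ u v, M.bracket u v = M.nabla u v - M.nabla v u :=
    fun u v => (M.torsion_free u v).symm
  have nab_phi : ∀ u v, M.nabla u (M.phi v) = M.phi (M.nabla u v)
      + (M.g (M.phi (M.nabla u M.xi)) v • M.xi - M.eta v • M.phi (M.nabla u M.xi)) := by
    intro u v
    have h := M.star e he u v
    linear_combination (norm := module) h
  have hax : ∀ u v, M.act u (M.eta v)
      = M.g (M.nabla u v) M.xi + M.g (M.nabla u M.xi) v := by
    intro u v
    have h := M.metric_compat u v M.xi
    rw [M.g_symm v (M.nabla u M.xi)] at h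
    rw [M.eta_def]
    exact h
  simp only [N1, Bop, hb]
  rw [nab_phi (M.phi x) y, nab_phi (M.phi y) x, nab_phi y x, nab_phi x y,
    hax x y, hax y x]
  simp only [map_add, map_sub, map_smul, M.phi_sq, M.phi_xi, M.eta_phi, smul_zero,
    zero_smul, M.eta_nabla_xi', LinearMap.add_apply, LinearMap.sub_apply,
    LinearMap.smul_apply, smul_eq_mul, M.eta_def, M.g_phi_xi]
  module

lemma normal_iff_B (e : Module.Basis (Fin 3) C X) (he : M.Gram e) :
    M.Normal ↔ ∀ x, M.Bop x = 0 := by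
  constructor
  · intro hn
    have hN : ∀ x y, (M.g (M.Bop x) y - M.g (M.Bop y) x) • M.xi
        + M.eta x • M.Bop y - M.eta y • M.Bop x = 0 := by
      intro x y
      rw [← M.N1_eq e he]; exact hn x y
    have hBxi : M.Bop M.xi = -(M.nabla M.xi M.xi) := by
      rw [Bop, M.phi_xi, M.nabla_zero_left, map_zero, zero_sub]
    have etaB : ∀ y, M.g (M.Bop y) M.xi = 0 := by
      intro y
      rw [Bop, map_sub, LinearMap.sub_apply, ← M.eta_def, ← M.eta_def,
        M.eta_phi, M.eta_nabla_xi', sub_self]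
    -- specialize x := ξ
    have key : ∀ y, M.Bop y = (M.g (M.nabla M.xi M.xi) y + M.g (M.Bop y) M.xi) • M.xi
        + M.eta y • M.Bop M.xi := by
      intro y
      have h := hN M.xi y
      rw [hBxi, M.eta_xi] at h
      rw [hBxi]
      have : M.g (-(M.nabla M.xi M.xi)) y = -M.g (M.nabla M.xi M.xi) y := by
        rw [map_neg, LinearMap.neg_apply]
      rw [this] at h
      linear_combination (norm := module) h
    have hAxi : M.nabla M.xi M.xi = 0 := by
      apply M.nondeg e he
      intro z
      have h := congrArg (fun w => M.g w M.xi) (key z)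
      simp only [map_sub, map_add, map_smul, LinearMap.sub_apply, LinearMap.add_apply,
        LinearMap.smul_apply, smul_eq_mul, M.g_xi_xi, etaB, hBxi] at h
      have h2 : M.g (-(M.nabla M.xi M.xi)) M.xi = 0 := by
        rw [map_neg, LinearMap.neg_apply, M.eta_nabla_xi, neg_zero]
      rw [h2] at h
      linear_combination -h
    intro x
    have h := key x
    rw [hAxi, hBxi, hAxi, etaB, map_zero, LinearMap.zero_apply] at h
    simpa using h
  · intro hB x y
    rw [M.N1_eq e he, hB, hB]
    simp


/-- Twice the skew part of `(y,z) ↦ g(∇_yξ, z)`. -/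
def KF (M : APCMM3 C X) : X → X → C := fun y z =>
  M.g (M.nabla y M.xi) z - M.g (M.nabla z M.xi) y

/-- Twice the symmetric part of `(y,z) ↦ g(∇_yξ, z)`, contracted with `φ`. -/
def SF (M : APCMM3 C X) : X → X → C := fun y z =>
  M.g (M.nabla y M.xi) (M.phi z) + M.g (M.nabla (M.phi z) M.xi) y

lemma two_half : (2 : C) * (algebraMap ℝ C (1/2)) = 1 := by
  have h0 : ((2:C)) = algebraMap ℝ C 2 := by rw [map_ofNat]
  rw [h0, ← map_mul]
  norm_num

lemma exists_ab_of_B (e : Module.Basis (Fin 3) C X) (he : M.Gram e)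
    (hB : ∀ x, M.Bop x = 0) :
    ∃ α β : C, ∀ x, M.nabla x M.xi = α • (x - M.eta x • M.xi) + β • M.phi x := by
  have hcomm : ∀ x, M.phi (M.nabla (M.phi x) M.xi) = M.nabla x M.xi := by
    intro x
    have h := hB x
    rwa [Bop, sub_eq_zero] at h
  have hAxi : M.nabla M.xi M.xi = 0 := by
    have h := hcomm M.xi
    rw [M.phi_xi, M.nabla_zero_left, map_zero] at h
    exact h.symm
  have hphiA : ∀ x, M.nabla (M.phi x) M.xi = M.phi (M.nabla x M.xi) := by
    intro x
    have h := hcomm (M.phi x)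
    rw [M.phi_sq x, M.nabla_sub_left, M.nabla_smul_left, hAxi, smul_zero, sub_zero] at h
    exact h.symm
  -- lambda2 for KF
  have hK := M.lambda2 e he M.KF
    (by intro y y' z
        simp only [KF, M.nabla_add_left, map_add, LinearMap.add_apply]; ring)
    (by intro f y z
        simp only [KF, M.nabla_smul_left, map_smul, LinearMap.smul_apply, smul_eq_mul]; ring)
    (by intro y z z'
        simp only [KF, M.nabla_add_left, map_add, LinearMap.add_apply]; ring)
    (by intro f y z
        simp only [KF, M.nabla_smul_left, map_smul, LinearMap.smul_apply, smul_eq_mul]; ring)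
    (by intro y z; simp only [KF]; ring)
    (by intro z
        simp [KF, hAxi, M.eta_nabla_xi])
  -- lambda2 for SF
  have hS := M.lambda2 e he M.SF
    (by intro y y' z
        simp only [SF, M.nabla_add_left, map_add, LinearMap.add_apply]; ring)
    (by intro f y z
        simp only [SF, M.nabla_smul_left, map_smul, LinearMap.smul_apply, smul_eq_mul]; ring)
    (by intro y z z'
        simp only [SF, map_add, M.nabla_add_left, LinearMap.add_apply]; ring)
    (by intro f y z
        simp only [SF, map_smul, M.nabla_smul_left, LinearMap.smul_apply, smul_eq_mul]; ring)
    (by intro y z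
        simp only [SF]
        have e1 := M.g_phi_left (M.nabla z M.xi) y
        have e2 := M.g_phi_left (M.nabla y M.xi) z
        have e3 : M.g (M.nabla (M.phi z) M.xi) y = M.g (M.phi (M.nabla z M.xi)) y := by
          rw [hphiA]
        have e4 : M.g (M.nabla (M.phi y) M.xi) z = M.g (M.phi (M.nabla y M.xi)) z := by
          rw [hphiA]
        linear_combination e3 + e1 + e4 + e2)
    (by intro z
        simp only [SF, hAxi, map_zero, LinearMap.zero_apply, zero_add]
        exact M.eta_nabla_xi (M.phi z))
  have h2h : (2:C) * (algebraMap ℝ C (1/2)) = 1 := two_half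
  have hc2 : M.cC e * M.cC e = 1 := M.c_sq e he
  refine ⟨algebraMap ℝ C (1/2) * M.cC e * M.fcoef e M.SF,
    -(algebraMap ℝ C (1/2) * M.cC e * M.fcoef e M.KF), fun y => ?_⟩
  apply eq_of_sub_eq_zero
  apply M.nondeg e he
  intro z
  have S1 := hS y (M.phi z)
  have P1 := M.Phi_eq e he y (M.phi z)
  have P2 := M.Phi_eq e he y z
  have K1 := hK y z
  simp only [PhiF] at P1 P2
  have r1 : M.SF y (M.phi z) = M.g (M.nabla y M.xi) z + M.g (M.nabla z M.xi) y := by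
    simp only [SF]
    rw [M.phi_sq z, M.nabla_sub_left, M.nabla_smul_left, hAxi, smul_zero, sub_zero,
      map_sub, map_smul, M.eta_nabla_xi y, smul_zero, sub_zero]
  have q1 : M.g y (M.phi (M.phi z)) = M.g y z - M.eta y * M.eta z := by
    rw [M.phi_sq z, map_sub, map_smul, smul_eq_mul, ← M.eta_def y]
    ring
  have gpl := M.g_phi_left y z
  have hsz : M.g M.xi z = M.eta z := by
    rw [M.g_symm, ← M.eta_def]
  simp only [KF] at K1
  simp only [map_sub, map_smul, map_add, LinearMap.sub_apply, LinearMap.smul_apply,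
    LinearMap.add_apply, smul_eq_mul, hsz]
  apply cancel_two'
  linear_combination (M.cC e * M.fcoef e M.SF) * q1 - (M.cC e * M.fcoef e M.SF) * P1
    + (M.cC e * M.cC e) * S1 - (M.cC e * M.cC e) * r1
    + (M.cC e * M.fcoef e M.KF) * gpl - (M.cC e * M.fcoef e M.KF) * P2
    + (M.cC e * M.cC e) * K1
    - (2 * M.g (M.nabla y M.xi) z) * hc2
    + (-(M.cC e * M.fcoef e M.SF) * (M.g y z - M.eta y * M.eta z)
        + M.cC e * M.fcoef e M.KF * (M.g (M.phi y) z)) * h2h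

lemma B_of_ab (α β : C)
    (hab : ∀ x, M.nabla x M.xi = α • (x - M.eta x • M.xi) + β • M.phi x) :
    ∀ x, M.Bop x = 0 := by
  intro x
  rw [Bop, hab (M.phi x), hab x]
  simp only [map_add, map_smul, map_sub, M.phi_sq, M.eta_phi, M.phi_xi, zero_smul,
    smul_zero, sub_zero]
  module

lemma b_of_c (e : Module.Basis (Fin 3) C X) (he : M.Gram e) (α β : C)
    (hab : ∀ x, M.nabla x M.xi = α • (x - M.eta x • M.xi) + β • M.phi x) :
    ∀ x y, M.nabla x (M.phi y) - M.phi (M.nabla x y)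
      = β • (M.g x y • M.xi - M.eta y • x)
        + α • (M.g (M.phi x) y • M.xi - M.eta y • M.phi x) := by
  intro x y
  have h := M.star e he x y
  rw [hab x] at h
  have hgy : M.g M.xi y = M.eta y := by rw [M.g_symm, ← M.eta_def]
  simp only [map_add, map_smul, map_sub, M.phi_sq, M.phi_xi, smul_zero, sub_zero,
    LinearMap.add_apply, LinearMap.smul_apply, LinearMap.sub_apply, smul_eq_mul,
    hgy] at h
  linear_combination (norm := module) h

lemma c_of_b (α β : C)
    (hb : ∀ x y, M.nabla x (M.phi y) - M.phi (M.nabla x y)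
      = β • (M.g x y • M.xi - M.eta y • x)
        + α • (M.g (M.phi x) y • M.xi - M.eta y • M.phi x)) :
    ∀ x, M.nabla x M.xi = α • (x - M.eta x • M.xi) + β • M.phi x := by
  intro x
  have h := hb x M.xi
  rw [M.phi_xi, M.nabla_zero_right, M.eta_xi, M.g_phi_xi, ← M.eta_def x] at h
  have h2 := congrArg M.phi h
  simp only [map_add, map_smul, map_sub, map_neg, map_zero, M.phi_sq, M.phi_xi,
    smul_zero, zero_sub, zero_smul, one_smul, M.eta_nabla_xi', sub_zero] at h2
  linear_combination (norm := module) -h2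

end APCMM3

/-- For a 3-dimensional almost paracontact metric manifold `M`
with Levi-Civita connection `∇`, the following are mutually equivalent:
(a) `M` is normal;
(b) there exist functions `α, β` on `M` with
`(∇_X φ)Y = β(g(X,Y)ξ − η(Y)X) + α(g(φX,Y)ξ − η(Y)φX)` for all `X, Y`;
(c) there exist functions `α, β` on `M` with
`∇_X ξ = α(X − η(X)ξ) + βφX` for all `X`. -/
theorem normal_iff_nabla_phi_and_iff_nabla_xi (M : APCMM3 C X) :
    (M.Normal ↔ ∃ α β : C, ∀ x y : X,
      M.nabla x (M.phi y) - M.phi (M.nabla x y)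
        = β • (M.g x y • M.xi - M.eta y • x)
          + α • (M.g (M.phi x) y • M.xi - M.eta y • M.phi x)) ∧
    (M.Normal ↔ ∃ α β : C, ∀ x : X,
      M.nabla x M.xi = α • (x - M.eta x • M.xi) + β • M.phi x) := by
  obtain ⟨e, h1, h2, h3, h4, h5, h6⟩ := M.frame
  have he : M.Gram e := ⟨h1, h2, h3, h4, h5, h6⟩
  have iffC : M.Normal ↔ ∃ α β : C, ∀ x : X,
      M.nabla x M.xi = α • (x - M.eta x • M.xi) + β • M.phi x := by
    rw [M.normal_iff_B e he]
    constructor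
    · exact fun hB => M.exists_ab_of_B e he hB
    · rintro ⟨α, β, hc⟩
      exact M.B_of_ab α β hc
  refine ⟨iffC.trans ?_, iffC⟩
  constructor
  · rintro ⟨α, β, hc⟩
    exact ⟨α, β, M.b_of_c e he α β hc⟩
  · rintro ⟨α, β, hb⟩
    exact ⟨α, β, M.c_of_b α β hb⟩
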